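/- For α ∈ [0,1], the α-SVRG gradient estimator g_α(w) = α(∇J(w̄) - ∇Q(w̄;x_i)) + ∇Q(w;x_i), with i uniform on {1,...,N}, satisfies for any fixed w and w̄: E‖∇J(w) - g_α(w)‖² ≤ (2α+6)δ²‖w° - w‖² + 8αδ²‖w° - w̄‖² + 3(1-α)σ². -/

import Mathlib

open Finset

private lemma var_sum_le {E : Type*} [NormedAddCommGroup E] [InnerProductSpace ℝ E]
    {N : ℕ} (hN : 0 < N) (v : Fin N → E) :
    ∑ n, ‖v n - (N : ℝ)⁻¹ • ∑ m, v m‖ ^ 2 ≤ ∑ n, ‖v n‖ ^ 2 := by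
  set s : E := (N : ℝ)⁻¹ • ∑ m, v m with hs
  have hNne : (N : ℝ) ≠ 0 := Nat.cast_ne_zero.mpr hN.ne'
  have hsum : ∑ m, v m = (N : ℝ) • s := by
    rw [hs, smul_smul, mul_inv_cancel₀ hNne, one_smul]
  calc ∑ n, ‖v n - s‖ ^ 2
      = ∑ n, (‖v n‖ ^ 2 - 2 * inner ℝ (v n) s + ‖s‖ ^ 2) := by
        simp_rw [norm_sub_sq_real]
    _ = ∑ n, ‖v n‖ ^ 2 - 2 * inner ℝ (∑ n, v n) s + N * ‖s‖ ^ 2 := by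
        rw [Finset.sum_add_distrib, Finset.sum_sub_distrib, sum_inner, Finset.mul_sum]
        simp [Finset.card_univ]
    _ = ∑ n, ‖v n‖ ^ 2 - N * ‖s‖ ^ 2 := by
        rw [hsum, real_inner_smul_left, real_inner_self_eq_norm_sq]; ring
    _ ≤ ∑ n, ‖v n‖ ^ 2 := by
        have : 0 ≤ (N : ℝ) * ‖s‖ ^ 2 := by positivity
        linarith

private lemma three_sq {E : Type*} [NormedAddCommGroup E] (x y z : E) :
    ‖x + y + z‖ ^ 2 ≤ 3 * ‖x‖ ^ 2 + 3 * ‖y‖ ^ 2 + 3 * ‖z‖ ^ 2 := by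
  have h : ‖x + y + z‖ ≤ ‖x‖ + ‖y‖ + ‖z‖ := norm_add₃_le
  nlinarith [norm_nonneg (x + y + z), norm_nonneg x, norm_nonneg y, norm_nonneg z,
    sq_nonneg (‖x‖ - ‖y‖), sq_nonneg (‖x‖ - ‖z‖), sq_nonneg (‖y‖ - ‖z‖)]


/-- Variance bound of the α-SVRG gradient noise: with
`g_α(w) = α(∇J(w̄) - ∇Q(w̄;xᵢ)) + ∇Q(w;xᵢ)` and `i` uniform on `{1,…,N}`,
for any fixed `w` and `w̄`,
`E‖∇J(w) - g_α(w)‖² ≤ (2α+6)δ²‖w°-w‖² + 8αδ²‖w°-w̄‖² + 3(1-α)σ²`. -/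
theorem alpha_svrg_gradient_noise_bound
    {E : Type*} [NormedAddCommGroup E] [InnerProductSpace ℝ E] [CompleteSpace E]
    {N : ℕ} (hN : 0 < N)
    (Q : Fin N → E → ℝ) (gradQ : Fin N → E → E) (J : E → ℝ) (gradJ : E → E)
    (δn : Fin N → ℝ) (δ σ α : ℝ) (wo : E)
    (hα0 : 0 ≤ α) (hα1 : α ≤ 1)
    (hQ : ∀ n x, HasGradientAt (Q n) (gradQ n x) x)
    (hJ : ∀ x, J x = (N : ℝ)⁻¹ * ∑ n, Q n x)
    (hgradJ : ∀ x, gradJ x = (N : ℝ)⁻¹ • ∑ n, gradQ n x)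
    (hLip : ∀ n x y, ‖gradQ n x - gradQ n y‖ ≤ δn n * ‖x - y‖)
    (hδ : δ ^ 2 = (N : ℝ)⁻¹ * ∑ n, δn n ^ 2)
    (hσ : σ ^ 2 = (N : ℝ)⁻¹ * ∑ n, ‖gradQ n wo‖ ^ 2)
    (hmin : IsMinOn J Set.univ wo)
    (w wbar : E) :
    (N : ℝ)⁻¹ * ∑ n,
        ‖gradJ w - (α • (gradJ wbar - gradQ n wbar) + gradQ n w)‖ ^ 2 ≤
      (2 * α + 6) * δ ^ 2 * ‖wo - w‖ ^ 2 + 8 * α * δ ^ 2 * ‖wo - wbar‖ ^ 2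
        + 3 * (1 - α) * σ ^ 2 := by
  have hNpos : (0 : ℝ) < N := Nat.cast_pos.mpr hN
  have hNinv : (0 : ℝ) ≤ (N : ℝ)⁻¹ := by positivity
  -- centered vectors
  set B : Fin N → E := fun n => gradQ n w - gradQ n wo with hB
  set C : Fin N → E := fun n => gradQ n wbar - gradQ n wo with hC
  set h : Fin N → E := fun n => gradQ n wo with hh
  set Bb : E := (N : ℝ)⁻¹ • ∑ m, B m with hBb
  set Cb : E := (N : ℝ)⁻¹ • ∑ m, C m with hCb
  set hb : E := (N : ℝ)⁻¹ • ∑ m, h m with hhb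
  have hJw : gradJ w = Bb + hb := by
    rw [hgradJ, hBb, hhb, ← smul_add, ← Finset.sum_add_distrib]
    simp [hB, hh]
  have hJwbar : gradJ wbar = Cb + hb := by
    rw [hgradJ, hCb, hhb, ← smul_add, ← Finset.sum_add_distrib]
    simp [hC, hh]
  -- pointwise decomposition
  have hdec : ∀ n, gradJ w - (α • (gradJ wbar - gradQ n wbar) + gradQ n w)
      = (Bb - B n) + α • (C n - Cb) + (1 - α) • (hb - h n) := by
    intro n
    have h1 : gradQ n w = B n + h n := by simp [hB, hh]
    have h2 : gradQ n wbar = C n + h n := by simp [hC, hh]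
    rw [hJw, hJwbar, h1, h2]
    module
  -- pointwise bound
  have hpt : ∀ n, ‖gradJ w - (α • (gradJ wbar - gradQ n wbar) + gradQ n w)‖ ^ 2
      ≤ 3 * ‖B n - Bb‖ ^ 2 + 3 * α ^ 2 * ‖C n - Cb‖ ^ 2
        + 3 * (1 - α) ^ 2 * ‖h n - hb‖ ^ 2 := by
    intro n
    rw [hdec n]
    have := three_sq (Bb - B n) (α • (C n - Cb)) ((1 - α) • (hb - h n))
    rw [norm_smul, norm_smul, norm_sub_rev Bb (B n), norm_sub_rev hb (h n),
      Real.norm_eq_abs, Real.norm_eq_abs, abs_of_nonneg hα0,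
      abs_of_nonneg (by linarith : (0:ℝ) ≤ 1 - α), mul_pow, mul_pow] at this
    linarith
  -- sum bounds
  have hBsum : ∑ n, ‖B n - Bb‖ ^ 2 ≤ (∑ n, δn n ^ 2) * ‖wo - w‖ ^ 2 := by
    refine le_trans (var_sum_le hN B) ?_
    rw [Finset.sum_mul]
    refine Finset.sum_le_sum fun n _ => ?_
    have h1 : ‖B n‖ ≤ δn n * ‖w - wo‖ := hLip n w wo
    have h2 : ‖B n‖ ^ 2 ≤ (δn n * ‖w - wo‖) ^ 2 :=
      pow_le_pow_left₀ (norm_nonneg _) h1 2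
    rw [norm_sub_rev w wo] at h2
    calc ‖B n‖ ^ 2 ≤ (δn n * ‖wo - w‖) ^ 2 := h2
      _ = δn n ^ 2 * ‖wo - w‖ ^ 2 := by ring
  have hCsum : ∑ n, ‖C n - Cb‖ ^ 2 ≤ (∑ n, δn n ^ 2) * ‖wo - wbar‖ ^ 2 := by
    refine le_trans (var_sum_le hN C) ?_
    rw [Finset.sum_mul]
    refine Finset.sum_le_sum fun n _ => ?_
    have h1 : ‖C n‖ ≤ δn n * ‖wbar - wo‖ := hLip n wbar wo
    have h2 : ‖C n‖ ^ 2 ≤ (δn n * ‖wbar - wo‖) ^ 2 :=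
      pow_le_pow_left₀ (norm_nonneg _) h1 2
    rw [norm_sub_rev wbar wo] at h2
    calc ‖C n‖ ^ 2 ≤ (δn n * ‖wo - wbar‖) ^ 2 := h2
      _ = δn n ^ 2 * ‖wo - wbar‖ ^ 2 := by ring
  have hhsum : ∑ n, ‖h n - hb‖ ^ 2 ≤ ∑ n, ‖h n‖ ^ 2 := var_sum_le hN h
  -- assemble
  have hmain : (N : ℝ)⁻¹ * ∑ n,
      ‖gradJ w - (α • (gradJ wbar - gradQ n wbar) + gradQ n w)‖ ^ 2
      ≤ 3 * (δ ^ 2 * ‖wo - w‖ ^ 2) + 3 * α ^ 2 * (δ ^ 2 * ‖wo - wbar‖ ^ 2)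
        + 3 * (1 - α) ^ 2 * σ ^ 2 := by
    have hsum1 : ∑ n, ‖gradJ w - (α • (gradJ wbar - gradQ n wbar) + gradQ n w)‖ ^ 2
        ≤ 3 * ((∑ n, δn n ^ 2) * ‖wo - w‖ ^ 2)
          + 3 * α ^ 2 * ((∑ n, δn n ^ 2) * ‖wo - wbar‖ ^ 2)
          + 3 * (1 - α) ^ 2 * (∑ n, ‖h n‖ ^ 2) := by
      calc ∑ n, ‖gradJ w - (α • (gradJ wbar - gradQ n wbar) + gradQ n w)‖ ^ 2
          ≤ ∑ n, (3 * ‖B n - Bb‖ ^ 2 + 3 * α ^ 2 * ‖C n - Cb‖ ^ 2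
              + 3 * (1 - α) ^ 2 * ‖h n - hb‖ ^ 2) :=
            Finset.sum_le_sum fun n _ => hpt n
        _ = 3 * ∑ n, ‖B n - Bb‖ ^ 2 + 3 * α ^ 2 * ∑ n, ‖C n - Cb‖ ^ 2
              + 3 * (1 - α) ^ 2 * ∑ n, ‖h n - hb‖ ^ 2 := by
            rw [Finset.sum_add_distrib, Finset.sum_add_distrib,
              Finset.mul_sum, Finset.mul_sum, Finset.mul_sum]
        _ ≤ _ := by
            have n1 : (0:ℝ) ≤ 3 * α ^ 2 := by positivity
            have n2 : (0:ℝ) ≤ 3 * (1 - α) ^ 2 := by positivity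
            have := mul_le_mul_of_nonneg_left hCsum n1
            have := mul_le_mul_of_nonneg_left hhsum n2
            have := mul_le_mul_of_nonneg_left hBsum (by norm_num : (0:ℝ) ≤ 3)
            linarith
    have := mul_le_mul_of_nonneg_left hsum1 hNinv
    rw [hδ, hσ]
    calc (N : ℝ)⁻¹ * ∑ n,
        ‖gradJ w - (α • (gradJ wbar - gradQ n wbar) + gradQ n w)‖ ^ 2 ≤ _ := this
      _ = 3 * ((N : ℝ)⁻¹ * (∑ n, δn n ^ 2) * ‖wo - w‖ ^ 2)
          + 3 * α ^ 2 * ((N : ℝ)⁻¹ * (∑ n, δn n ^ 2) * ‖wo - wbar‖ ^ 2)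
          + 3 * (1 - α) ^ 2 * ((N : ℝ)⁻¹ * ∑ n, ‖h n‖ ^ 2) := by ring
      _ = _ := by rw [mul_assoc ((N:ℝ)⁻¹)]
  -- final arithmetic
  have hδ2 : (0:ℝ) ≤ δ ^ 2 := by
    rw [hδ]; positivity
  have hσ2 : (0:ℝ) ≤ σ ^ 2 := by
    rw [hσ]; positivity
  have hw2 : (0:ℝ) ≤ ‖wo - w‖ ^ 2 := by positivity
  have hwb2 : (0:ℝ) ≤ ‖wo - wbar‖ ^ 2 := by positivity
  nlinarith [mul_nonneg hδ2 hw2, mul_nonneg hδ2 hwb2,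
    mul_nonneg (mul_nonneg hα0 hδ2) hwb2,
    mul_nonneg (mul_nonneg (mul_nonneg hα0 (by linarith : (0:ℝ) ≤ 1 - α)) hδ2) hwb2,
    mul_nonneg (mul_nonneg hα0 (by linarith : (0:ℝ) ≤ 1 - α)) hσ2]
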